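/- Let p ≥ 5 be a prime with p ≡ 2 (mod 3). Let θ ∈ ℚ_p and q ∈ ℕ satisfy |θ−1|_p < |(q:ℚ_p)|_p < 1 and (θ−1)(1−θ−q) ≠ 0, and let f(x) = ((θx+q−1)/(x+θ+q−2))³ be the Potts–Bethe mapping. Then the derivative of f at the fixed point x⁽⁰⁾ = 1 has p-adic norm |f′(1)|_p = |θ−1|_p / |q|_p < 1; that is, x⁽⁰⁾ = 1 is an attracting fixed point. -/

import Mathlib

/-- the derivative of the Potts–Bethe mapping at the fixed point
`x⁽⁰⁾ = 1` has norm `‖θ-1‖/‖q‖ < 1`, i.e. `1` is an attracting fixed point. -/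
theorem potts_bethe_attracting_fixed_point (p : ℕ) [Fact (Nat.Prime p)]
    (hp5 : 5 ≤ p) (hp3 : p % 3 = 2) (θ : ℚ_[p]) (q : ℕ)
    (hθq : ‖θ - 1‖ < ‖(q : ℚ_[p])‖) (hq : ‖(q : ℚ_[p])‖ < 1)
    (hne : (θ - 1) * (1 - θ - (q : ℚ_[p])) ≠ 0) :
    ‖deriv (fun x : ℚ_[p] => ((θ * x + (q : ℚ_[p]) - 1) / (x + θ + (q : ℚ_[p]) - 2)) ^ 3) 1‖
      = ‖θ - 1‖ / ‖(q : ℚ_[p])‖ ∧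
    ‖θ - 1‖ / ‖(q : ℚ_[p])‖ < 1 := by
  have hqpos : 0 < ‖(q : ℚ_[p])‖ := lt_of_le_of_lt (norm_nonneg _) hθq
  -- norm of c = θ + q - 1 equals ‖q‖
  have hcnorm : ‖θ + (q : ℚ_[p]) - 1‖ = ‖(q : ℚ_[p])‖ := by
    have h : θ + (q : ℚ_[p]) - 1 = (θ - 1) + (q : ℚ_[p]) := by ring
    rw [h]
    have hne' : ‖θ - 1‖ ≠ ‖(q : ℚ_[p])‖ := ne_of_lt hθq
    rw [Padic.add_eq_max_of_ne hne']
    exact max_eq_right hθq.le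
  have hc : θ + (q : ℚ_[p]) - 1 ≠ 0 := by
    intro h
    rw [h, norm_zero] at hcnorm
    exact absurd hcnorm.symm (ne_of_gt hqpos)
  -- derivative computation
  have hN : HasDerivAt (fun x : ℚ_[p] => θ * x + (q : ℚ_[p]) - 1) θ 1 := by
    have := ((hasDerivAt_id (1 : ℚ_[p])).const_mul θ).add_const ((q : ℚ_[p]) - 1)
    simpa [mul_one, add_sub_assoc] using this
  have hD : HasDerivAt (fun x : ℚ_[p] => x + θ + (q : ℚ_[p]) - 2) 1 1 := by
    have := (hasDerivAt_id (1 : ℚ_[p])).add_const (θ + (q : ℚ_[p]) - 2)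
    convert this using 2 with x
    · rfl
    · rfl
    simp [id]; ring
  have hD1 : (fun x : ℚ_[p] => x + θ + (q : ℚ_[p]) - 2) 1 = θ + (q : ℚ_[p]) - 1 := by
    simp; ring
  have hdiv : HasDerivAt (fun x : ℚ_[p] => (θ * x + (q : ℚ_[p]) - 1) / (x + θ + (q : ℚ_[p]) - 2))
      ((θ * (θ + (q : ℚ_[p]) - 1) - (θ * 1 + (q : ℚ_[p]) - 1) * 1) / (θ + (q : ℚ_[p]) - 1) ^ 2)
      1 := by
    have := hN.div hD (fun h => hc (by rw [← h]; ring))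
    rw [show (1 : ℚ_[p]) + θ + (q : ℚ_[p]) - 2 = θ + (q : ℚ_[p]) - 1 by ring] at this
    exact this
  have hval : (θ * 1 + (q : ℚ_[p]) - 1) / (1 + θ + (q : ℚ_[p]) - 2) = 1 := by
    rw [mul_one]
    have : (1 : ℚ_[p]) + θ + (q : ℚ_[p]) - 2 = θ + (q : ℚ_[p]) - 1 := by ring
    rw [this]
    exact div_self hc
  have hpow : HasDerivAt (fun x : ℚ_[p] => ((θ * x + (q : ℚ_[p]) - 1) / (x + θ + (q : ℚ_[p]) - 2)) ^ 3)
      ((3 : ℕ) * (((θ * 1 + (q : ℚ_[p]) - 1) / (1 + θ + (q : ℚ_[p]) - 2)) ^ 2) *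
        ((θ * (θ + (q : ℚ_[p]) - 1) - (θ * 1 + (q : ℚ_[p]) - 1) * 1) / (θ + (q : ℚ_[p]) - 1) ^ 2))
      1 := by
    exact hdiv.pow 3
  have hderiv : deriv (fun x : ℚ_[p] => ((θ * x + (q : ℚ_[p]) - 1) / (x + θ + (q : ℚ_[p]) - 2)) ^ 3) 1
      = 3 * (θ - 1) / (θ + (q : ℚ_[p]) - 1) := by
    rw [hpow.deriv, hval]
    field_simp
    ring
  have h3 : ‖(3 : ℚ_[p])‖ = 1 := by
    have hp : p ≠ 3 := by omega
    have : ¬ ((p : ℤ) ∣ (3 : ℤ)) := by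
      intro h
      have := Int.le_of_dvd (by norm_num) h
      omega
    have hle : ‖((3 : ℤ) : ℚ_[p])‖ ≤ 1 := Padic.norm_int_le_one _
    have hlt := (Padic.norm_intCast_lt_one_iff (k := (3 : ℤ))).not.mpr this
    push_neg at hlt
    have := le_antisymm hle (by exact_mod_cast hlt)
    simpa using this
  constructor
  · rw [hderiv, norm_div, norm_mul, h3, one_mul, hcnorm]
  · exact (div_lt_one hqpos).mpr hθq
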